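/- arXiv:1710.10038 — 2 statements merged into one kernel-verified Lean document; each statement's English description precedes it below -/
import Mathlib

section
/- Let S, T ⊆ M be subalgebras of a finite-dimensional von Neumann algebra with T ∩ S ⊇ some subalgebra R = S ∩ T. If the inequality H(S)_ρ + H(T)_ρ − H(M)_ρ − H(S∩T)_ρ ≥ 0 holds for all densities ρ ∈ M, then E_S ∘ E_T = E_T ∘ E_S = E_{S∩T}, i.e. S and T form a commuting square. -/
open Matrix
open scoped ComplexOrder

variable {ι : Type*} [Fintype ι] [DecidableEq ι]

/-- Functional calculus on Hermitian matrices. -/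
noncomputable def matFun (f : ℝ → ℝ) (ρ : Matrix ι ι ℂ) : Matrix ι ι ℂ :=
  if h : ρ.IsHermitian then
    (h.eigenvectorUnitary : Matrix ι ι ℂ) *
      Matrix.diagonal (fun i => (f (h.eigenvalues i) : ℂ)) *
      star (h.eigenvectorUnitary : Matrix ι ι ℂ)
  else 0

/-- Matrix logarithm (on the support: `Real.log 0 = 0`). -/
noncomputable def matLog (ρ : Matrix ι ι ℂ) : Matrix ι ι ℂ := matFun Real.log ρ

/-- von Neumann entropy. -/
noncomputable def vnEntropy (ρ : Matrix ι ι ℂ) : ℝ :=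
  -(Matrix.trace (ρ * matLog ρ)).re

/-- Quantum relative entropy. -/
noncomputable def relEntropy (ρ σ : Matrix ι ι ℂ) : ℝ :=
  (Matrix.trace (ρ * matLog ρ - ρ * matLog σ)).re

/-- A density matrix. -/
def IsDensity (ρ : Matrix ι ι ℂ) : Prop := ρ.PosSemidef ∧ Matrix.trace ρ = 1

/-- `E` is the trace-preserving conditional expectation onto the subalgebra `N`. -/
def IsCondExp (N : StarSubalgebra ℂ (Matrix ι ι ℂ))
    (E : Matrix ι ι ℂ →ₗ[ℂ] Matrix ι ι ℂ) : Prop :=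
  (∀ a, E a ∈ N) ∧ (∀ b ∈ N, E b = b) ∧
  (∀ a, ∀ b ∈ N, Matrix.trace (a * b) = Matrix.trace (E a * b))

set_option linter.unusedSectionVars false
set_option maxHeartbeats 1000000
section Aux
open Finset
lemma trace_mul_matFun {ρ : Matrix ι ι ℂ} (hρ : ρ.IsHermitian) (f : ℝ → ℝ) :
    Matrix.trace (ρ * matFun f ρ) =
      ∑ i, ((hρ.eigenvalues i : ℂ) * (f (hρ.eigenvalues i) : ℂ)) := by
  rw [matFun, dif_pos hρ]
  set U := (hρ.eigenvectorUnitary : Matrix ι ι ℂ) with hUdef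
  have hU : star U * U = 1 := Matrix.mem_unitaryGroup_iff'.mp hρ.eigenvectorUnitary.2
  have hsp := hρ.spectral_theorem
  set D1 : Matrix ι ι ℂ := Matrix.diagonal (RCLike.ofReal ∘ hρ.eigenvalues) with hD1
  set D2 := Matrix.diagonal (fun i => (f (hρ.eigenvalues i) : ℂ)) with hD2
  have key : ρ * (U * D2 * star U) = U * (D1 * D2) * star U := by
    rw [hsp]
    calc U * D1 * star U * (U * D2 * star U)
        = U * D1 * (star U * U) * D2 * star U := by noncomm_ring
      _ = U * (D1 * D2) * star U := by rw [hU]; noncomm_ring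
  rw [key, Matrix.trace_mul_cycle, ← mul_assoc, hU, one_mul, hD1, hD2,
    Matrix.diagonal_mul_diagonal, Matrix.trace_diagonal]
  rfl

lemma matFun_one {ρ : Matrix ι ι ℂ} (hρ : ρ.IsHermitian) :
    matFun (fun _ => 1) ρ = 1 := by
  rw [matFun, dif_pos hρ]
  have hU : (hρ.eigenvectorUnitary : Matrix ι ι ℂ) * star (hρ.eigenvectorUnitary : Matrix ι ι ℂ) = 1 :=
    Matrix.mem_unitaryGroup_iff.mp hρ.eigenvectorUnitary.2
  simp only [Complex.ofReal_one]
  rw [Matrix.diagonal_one, mul_one, hU]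

lemma matFun_id {ρ : Matrix ι ι ℂ} (hρ : ρ.IsHermitian) :
    matFun id ρ = ρ := by
  rw [matFun, dif_pos hρ]
  exact hρ.spectral_theorem.symm

lemma trace_eq_sum_eig {ρ : Matrix ι ι ℂ} (hρ : ρ.IsHermitian) :
    Matrix.trace ρ = ∑ i, (hρ.eigenvalues i : ℂ) := by
  have := trace_mul_matFun hρ (fun _ => 1)
  rw [matFun_one hρ, mul_one] at this
  simpa using this

lemma trace_sq_eq_sum_eig {ρ : Matrix ι ι ℂ} (hρ : ρ.IsHermitian) :
    Matrix.trace (ρ * ρ) = ∑ i, ((hρ.eigenvalues i : ℂ) * (hρ.eigenvalues i : ℂ)) := by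
  have := trace_mul_matFun hρ id
  rw [matFun_id hρ] at this
  exact this

lemma trace_mul_conjTranspose_re_nonneg (a : Matrix ι ι ℂ) :
    0 ≤ (Matrix.trace (a * aᴴ)).re ∧
      ((Matrix.trace (a * aᴴ)).re = 0 → a = 0) := by
  have h : Matrix.trace (a * aᴴ) = ∑ i, ∑ j, (a i j * star (a i j)) := by
    simp [Matrix.trace, Matrix.diag, Matrix.mul_apply, Matrix.conjTranspose_apply]
  have h2 : (Matrix.trace (a * aᴴ)).re = ∑ i, ∑ j, Complex.normSq (a i j) := by
    rw [h]
    simp [Complex.normSq_apply]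
  constructor
  · rw [h2]
    exact Finset.sum_nonneg fun i _ => Finset.sum_nonneg fun j _ => Complex.normSq_nonneg _
  · intro h0
    rw [h2] at h0
    ext i j
    have h1 : ∀ i ∈ Finset.univ, (0:ℝ) ≤ ∑ j, Complex.normSq (a i j) :=
      fun i _ => Finset.sum_nonneg fun j _ => Complex.normSq_nonneg _
    have hi := (Finset.sum_eq_zero_iff_of_nonneg h1).mp h0 i (by simp)
    have h3 : ∀ j ∈ Finset.univ, (0:ℝ) ≤ Complex.normSq (a i j) :=
      fun j _ => Complex.normSq_nonneg _
    have hij := (Finset.sum_eq_zero_iff_of_nonneg h3).mp hi j (by simp)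
    simpa [Complex.normSq_eq_zero] using hij

lemma phi_taylor {u : ℝ} (hu : |u| ≤ 1/2) :
    |(1+u) * Real.log (1+u) - u - u^2/2| ≤ 4 * |u|^3 := by
  have hu1 : |(-u)| < 1 := by rw [abs_neg]; linarith
  have hmain := Real.abs_log_sub_add_sum_range_le hu1 2
  have hsum : (∑ i ∈ Finset.range 2, (-u)^(i+1)/((i:ℝ)+1)) = -u + u^2/2 := by
    simp [Finset.sum_range_succ]
    ring
  rw [hsum, abs_neg, show (1:ℝ) - -u = 1 + u by ring] at hmain
  set r := Real.log (1+u) - u + u^2/2 with hr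
  have hre : -u + u^2/2 + Real.log (1+u) = r := by rw [hr]; ring
  rw [hre] at hmain
  have hb : |u|^3/(1-|u|) ≤ 2*|u|^3 := by
    rw [div_le_iff₀ (by linarith : (0:ℝ) < 1 - |u|)]
    nlinarith [abs_nonneg u, pow_nonneg (abs_nonneg u) 3]
  have hrb : |r| ≤ 2*|u|^3 := le_trans hmain hb
  have hkey : (1+u) * Real.log (1+u) - u - u^2/2 = (1+u)*r - u^3/2 := by
    rw [hr]; ring
  rw [hkey]
  have h1 := abs_le.mp hrb
  have h2 := abs_le.mp hu
  have h3 : |u^3| = |u|^3 := abs_pow u 3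
  have h5 : |(1+u)*r| ≤ 3*|u|^3 := by
    rw [abs_mul, abs_of_pos (by linarith [h2.1] : (0:ℝ) < 1 + u)]
    nlinarith [h2.2, hrb, abs_nonneg r, pow_nonneg (abs_nonneg u) 3]
  have h6 : |u^3/2| = |u|^3/2 := by rw [abs_div, abs_pow]; simp
  calc |(1+u)*r - u^3/2| ≤ |(1+u)*r| + |u^3/2| := abs_sub _ _
    _ ≤ 3*|u|^3 + |u|^3/2 := by rw [h6]; linarith
    _ ≤ 4*|u|^3 := by nlinarith [pow_nonneg (abs_nonneg u) 3]

lemma scalar_core {ι : Type*} [Fintype ι] (lam : ι → ℝ) (hcard : 0 < Fintype.card ι)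
    (h1 : ∑ i, lam i = 1)
    (hbd : ∀ i, |(Fintype.card ι : ℝ) * lam i - 1| ≤ 1/2) :
    |(- ∑ i, lam i * Real.log (lam i)) -
      (Real.log (Fintype.card ι) -
        (∑ i, ((Fintype.card ι : ℝ) * lam i - 1)^2) / (2 * (Fintype.card ι : ℝ)))| ≤
      (4 / (Fintype.card ι : ℝ)) * ∑ i, |(Fintype.card ι : ℝ) * lam i - 1|^3 := by
  set N : ℝ := (Fintype.card ι : ℝ) with hN
  have hN0 : 0 < N := by rw [hN]; exact_mod_cast hcard
  set u : ι → ℝ := fun i => N * lam i - 1 with hu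
  have hsumu : ∑ i, u i = 0 := by
    simp only [hu, Finset.sum_sub_distrib, ← Finset.mul_sum, h1, mul_one,
      Finset.sum_const, Finset.card_univ, smul_eq_mul, mul_one]
    simp [hN]
  have hpos : ∀ i, 0 < 1 + u i := by
    intro i
    have := abs_le.mp (hbd i)
    simp only [hu] at *
    linarith [this.1]
  have hlam : ∀ i, lam i = (1 + u i)/N := by
    intro i; field_simp [hu]
    simp only [hu]; ring
  have hterm : ∀ i, lam i * Real.log (lam i)
      = ((1 + u i) * Real.log (1 + u i))/N - (1 + u i) * Real.log N / N := by
    intro i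
    rw [hlam i, Real.log_div (ne_of_gt (hpos i)) (ne_of_gt hN0)]
    ring
  have hsum1 : ∑ i, (1 + u i) = N := by
    rw [Finset.sum_add_distrib, hsumu, Finset.sum_const, Finset.card_univ]
    simp [hN]
  have hpsisum : ∑ i, lam i * Real.log (lam i)
      = (∑ i, (1 + u i) * Real.log (1 + u i))/N - Real.log N := by
    rw [Finset.sum_congr rfl (fun i _ => hterm i), Finset.sum_sub_distrib,
      ← Finset.sum_div, ← Finset.sum_div, ← Finset.sum_mul, hsum1]
    field_simp
  have hphi : |(∑ i, (1 + u i) * Real.log (1 + u i)) - (∑ i, (u i)^2)/2|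
      ≤ 4 * ∑ i, |u i|^3 := by
    have : (∑ i, (1 + u i) * Real.log (1 + u i)) - (∑ i, (u i)^2)/2
        = ∑ i, ((1 + u i) * Real.log (1 + u i) - u i - (u i)^2/2) := by
      rw [Finset.sum_sub_distrib, Finset.sum_sub_distrib, hsumu]
      rw [Finset.sum_div]
      ring
    rw [this, Finset.mul_sum]
    refine le_trans (Finset.abs_sum_le_sum_abs _ _) (Finset.sum_le_sum fun i _ => ?_)
    exact phi_taylor (hbd i)
  have hexpr : (- ∑ i, lam i * Real.log (lam i)) -
      (Real.log N - (∑ i, (u i)^2) / (2 * N))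
      = -(1/N) * ((∑ i, (1 + u i) * Real.log (1 + u i)) - (∑ i, (u i)^2)/2) := by
    rw [hpsisum]
    field_simp
    ring
  rw [hexpr, abs_mul, abs_neg, abs_of_pos (by positivity : (0:ℝ) < 1/N)]
  calc (1/N) * |(∑ i, (1 + u i) * Real.log (1 + u i)) - (∑ i, (u i)^2)/2|
      ≤ (1/N) * (4 * ∑ i, |u i|^3) := by
        apply mul_le_mul_of_nonneg_left hphi (by positivity)
    _ = (4/N) * ∑ i, |u i|^3 := by ring

lemma trace_mul_conjTranspose_real (a : Matrix ι ι ℂ) :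
    Matrix.trace (a * aᴴ) = ((Matrix.trace (a * aᴴ)).re : ℂ) := by
  have h : Matrix.trace (a * aᴴ) = ((∑ i, ∑ j, Complex.normSq (a i j) : ℝ) : ℂ) := by
    push_cast
    simp [Matrix.trace, Matrix.diag, Matrix.mul_apply, Matrix.conjTranspose_apply,
      Complex.mul_conj]
  rw [h]
  simp


lemma entropy_expansion (y : Matrix ι ι ℂ) (hy : y.IsHermitian) (hty : Matrix.trace y = 0)
    (hcard : 0 < Fintype.card ι) (ε : ℝ) (hε : 0 < ε)
    (hsmall : ε * Real.sqrt (Matrix.trace (y * y)).re ≤ 1/2) :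
    IsDensity ((((Fintype.card ι : ℝ) : ℂ))⁻¹ • (1 + (ε : ℂ) • y)) ∧
    |vnEntropy ((((Fintype.card ι : ℝ) : ℂ))⁻¹ • (1 + (ε : ℂ) • y))
      - (Real.log (Fintype.card ι)
          - ε^2 * (Matrix.trace (y*y)).re / (2 * (Fintype.card ι : ℝ)))|
      ≤ 4 * ε^3 * ((Matrix.trace (y*y)).re * Real.sqrt ((Matrix.trace (y*y)).re))
          / (Fintype.card ι : ℝ) := by
  set N : ℝ := (Fintype.card ι : ℝ) with hNdef
  have hN0 : 0 < N := by rw [hNdef]; exact_mod_cast hcard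
  set τ : ℝ := (Matrix.trace (y*y)).re with hτdef
  have hτ0 : 0 ≤ τ := by
    have := (trace_mul_conjTranspose_re_nonneg y).1
    rwa [hy.eq] at this
  set ρ : Matrix ι ι ℂ := (((N : ℝ) : ℂ))⁻¹ • (1 + (ε : ℂ) • y) with hρdef
  have hρH : ρ.IsHermitian := by
    have : ρᴴ = ρ := by
      rw [hρdef]
      simp [Matrix.conjTranspose_smul, Matrix.conjTranspose_add, hy.eq, Complex.conj_ofReal]
    exact this
  have hNc : ((N : ℝ) : ℂ) ≠ 0 := by
    exact_mod_cast ne_of_gt hN0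
  have htrρ : Matrix.trace ρ = 1 := by
    rw [hρdef]
    simp only [Matrix.trace_smul, Matrix.trace_add, Matrix.trace_one, Matrix.trace_smul, hty,
      smul_zero, add_zero, smul_eq_mul]
    rw [show ((Fintype.card ι : ℕ) : ℂ) = ((N:ℝ):ℂ) by rw [hNdef]; push_cast; rfl]
    rw [mul_zero, add_zero]
    exact inv_mul_cancel₀ hNc
  have hyyH : y * y = y * yᴴ := by rw [hy.eq]
  have hyy : Matrix.trace (y * y) = ((τ : ℝ) : ℂ) := by
    rw [hτdef, hyyH]
    exact trace_mul_conjTranspose_real y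
  have hexp : ρ * ρ = (((N:ℝ):ℂ)⁻¹ * ((N:ℝ):ℂ)⁻¹) •
      (1 + (((ε:ℂ)) + (ε:ℂ)) • y + ((ε:ℂ) * (ε:ℂ)) • (y * y)) := by
    rw [hρdef, smul_mul_smul_comm]
    congr 1
    simp only [mul_add, add_mul, one_mul, mul_one, smul_mul_smul_comm]
    module
  have htrρ2 : Matrix.trace (ρ * ρ) = ((((N + ε^2 * τ)/N^2 : ℝ)) : ℂ) := by
    rw [hexp]
    simp only [Matrix.trace_smul, Matrix.trace_add, Matrix.trace_one, Matrix.trace_smul, hty,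
      smul_zero, add_zero, smul_eq_mul, hyy]
    rw [show ((Fintype.card ι : ℕ) : ℂ) = ((N:ℝ):ℂ) by rw [hNdef]; push_cast; rfl]
    push_cast
    field_simp
    ring
  set lam : ι → ℝ := hρH.eigenvalues with hlam
  have hsum1 : ∑ i, lam i = 1 := by
    have h' : ((∑ i, lam i : ℝ) : ℂ) = ((1:ℝ) : ℂ) := by
      push_cast
      rw [← trace_eq_sum_eig hρH, htrρ]
    exact_mod_cast h'
  have hsumsq : ∑ i, (lam i)^2 = (N + ε^2 * τ)/N^2 := by
    have h' : ((∑ i, (lam i)^2 : ℝ) : ℂ) = (((N + ε^2 * τ)/N^2 : ℝ) : ℂ) := by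
      rw [← htrρ2, trace_sq_eq_sum_eig hρH]
      push_cast
      exact Finset.sum_congr rfl fun i _ => by rw [hlam]; ring
    exact_mod_cast h'
  have hsumu2 : ∑ i, (N * lam i - 1)^2 = ε^2 * τ := by
    have e0 : ∀ i ∈ Finset.univ, (N*lam i - 1)^2 = N^2*(lam i)^2 - (2*N)*(lam i) + 1 :=
      fun i _ => by ring
    rw [Finset.sum_congr rfl e0, Finset.sum_add_distrib, Finset.sum_sub_distrib,
      ← Finset.mul_sum, ← Finset.mul_sum, Finset.sum_const, Finset.card_univ, nsmul_eq_mul,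
      mul_one, hsumsq, hsum1, ← hNdef]
    field_simp
    ring
  have hubd : ∀ i, |N * lam i - 1| ≤ ε * Real.sqrt τ := by
    intro i
    have hle : (N*lam i - 1)^2 ≤ ε^2*τ := by
      rw [← hsumu2]
      exact Finset.single_le_sum (f := fun j => (N*lam j - 1)^2)
        (fun j _ => sq_nonneg _) (Finset.mem_univ i)
    calc |N*lam i - 1| = Real.sqrt ((N*lam i - 1)^2) := (Real.sqrt_sq_eq_abs _).symm
      _ ≤ Real.sqrt (ε^2*τ) := Real.sqrt_le_sqrt hle
      _ = ε * Real.sqrt τ := by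
          rw [Real.sqrt_mul (sq_nonneg ε), Real.sqrt_sq hε.le]
  have hbd : ∀ i, |N * lam i - 1| ≤ 1/2 := fun i => (hubd i).trans hsmall
  have hlampos : ∀ i, 0 ≤ lam i := by
    intro i
    have := (abs_le.mp (hbd i)).1
    nlinarith [hN0]
  have hpsd : ρ.PosSemidef := (Matrix.IsHermitian.posSemidef_iff_eigenvalues_nonneg hρH).mpr hlampos
  have hvn : vnEntropy ρ = -∑ i, lam i * Real.log (lam i) := by
    rw [vnEntropy, matLog, trace_mul_matFun hρH]
    norm_cast
  have hcore := scalar_core lam hcard hsum1 (by rw [← hNdef] at *; exact hbd)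
  rw [← hNdef] at hcore
  rw [hsumu2] at hcore
  have hcube : ∑ i, |N*lam i - 1|^3 ≤ ε^3 * (τ * Real.sqrt τ) := by
    have : ∀ i ∈ Finset.univ, |N*lam i - 1|^3 ≤ (ε*Real.sqrt τ) * (N*lam i - 1)^2 := by
      intro i _
      calc |N*lam i - 1|^3 = |N*lam i - 1| * (N*lam i - 1)^2 := by
            rw [← sq_abs]; ring
        _ ≤ (ε*Real.sqrt τ) * (N*lam i - 1)^2 :=
            mul_le_mul_of_nonneg_right (hubd i) (sq_nonneg _)
    calc ∑ i, |N*lam i - 1|^3 ≤ ∑ i, (ε*Real.sqrt τ) * (N*lam i - 1)^2 :=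
          Finset.sum_le_sum this
      _ = (ε*Real.sqrt τ) * (ε^2*τ) := by rw [← Finset.mul_sum, hsumu2]
      _ = ε^3 * (τ * Real.sqrt τ) := by ring
  refine ⟨⟨hpsd, htrρ⟩, ?_⟩
  rw [hvn]
  calc |(-∑ i, lam i * Real.log (lam i)) - (Real.log N - ε^2*τ/(2*N))|
      ≤ (4/N) * ∑ i, |N*lam i - 1|^3 := hcore
    _ ≤ (4/N) * (ε^3 * (τ * Real.sqrt τ)) := by
        apply mul_le_mul_of_nonneg_left hcube (by positivity)
    _ = 4 * ε^3 * (τ * Real.sqrt τ) / N := by ring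

lemma condExp_unique {N : StarSubalgebra ℂ (Matrix ι ι ℂ)} {x y : Matrix ι ι ℂ}
    (hx : x ∈ N) (hy : y ∈ N)
    (h : ∀ b ∈ N, Matrix.trace (x * b) = Matrix.trace (y * b)) : x = y := by
  have hd : x - y ∈ N := sub_mem hx hy
  have hb : star (x - y) ∈ N := star_mem hd
  have h0 : Matrix.trace ((x - y) * (x - y)ᴴ) = 0 := by
    have h1 := h (star (x - y)) hb
    have : Matrix.trace ((x - y) * star (x - y)) = 0 := by
      rw [sub_mul, Matrix.trace_sub, h1, sub_self]
    simpa [Matrix.star_eq_conjTranspose] using this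
  have := (trace_mul_conjTranspose_re_nonneg (x - y)).2 (by rw [h0]; simp)
  exact sub_eq_zero.mp this

lemma condExp_one {N : StarSubalgebra ℂ (Matrix ι ι ℂ)}
    {E : Matrix ι ι ℂ →ₗ[ℂ] Matrix ι ι ℂ} (hE : IsCondExp N E) : E 1 = 1 :=
  hE.2.1 1 (one_mem N)

lemma condExp_trace {N : StarSubalgebra ℂ (Matrix ι ι ℂ)}
    {E : Matrix ι ι ℂ →ₗ[ℂ] Matrix ι ι ℂ} (hE : IsCondExp N E) (a : Matrix ι ι ℂ) :
    Matrix.trace (E a) = Matrix.trace a := by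
  have := hE.2.2 a 1 (one_mem N)
  simpa [mul_one] using this.symm

lemma condExp_star {N : StarSubalgebra ℂ (Matrix ι ι ℂ)}
    {E : Matrix ι ι ℂ →ₗ[ℂ] Matrix ι ι ℂ} (hE : IsCondExp N E) (a : Matrix ι ι ℂ) :
    E (star a) = star (E a) := by
  apply condExp_unique (hE.1 _) (star_mem (hE.1 a))
  intro b hb
  rw [← hE.2.2 (star a) b hb]
  have key : ∀ c : Matrix ι ι ℂ, Matrix.trace (star c * b) = star (Matrix.trace (star b * c)) := by
    intro c
    rw [← Matrix.trace_conjTranspose]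
    congr 1
    simp [Matrix.star_eq_conjTranspose, Matrix.conjTranspose_mul]
  rw [key a, key (E a)]
  congr 1
  rw [Matrix.trace_mul_comm, hE.2.2 a (star b) (star_mem hb), Matrix.trace_mul_comm]

lemma condExp_isHermitian {N : StarSubalgebra ℂ (Matrix ι ι ℂ)}
    {E : Matrix ι ι ℂ →ₗ[ℂ] Matrix ι ι ℂ} (hE : IsCondExp N E) {a : Matrix ι ι ℂ}
    (ha : a.IsHermitian) : (E a).IsHermitian := by
  have h := condExp_star hE a
  rw [Matrix.star_eq_conjTranspose, Matrix.star_eq_conjTranspose, ha.eq] at h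
  exact h.symm

lemma q_nonneg {y : Matrix ι ι ℂ} (hy : y.IsHermitian) : 0 ≤ (Matrix.trace (y*y)).re := by
  rw [show y*y = y*yᴴ by rw [hy.eq]]
  exact (trace_mul_conjTranspose_re_nonneg y).1

lemma q_eq_zero {y : Matrix ι ι ℂ} (hy : y.IsHermitian)
    (h : (Matrix.trace (y*y)).re = 0) : y = 0 := by
  rw [show y*y = y*yᴴ by rw [hy.eq]] at h
  exact (trace_mul_conjTranspose_re_nonneg y).2 h


end Aux

/-- Converse of algebraic strong subadditivity.  If
`H(S)_ρ + H(T)_ρ − H(M)_ρ − H(S∩T)_ρ ≥ 0` holds for every density `ρ`, then the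
conditional expectations satisfy `E_S ∘ E_T = E_T ∘ E_S = E_{S ⊓ T}`, i.e. `S`
and `T` form a commuting square. -/
theorem algebraic_SSA_converse
    (S T : StarSubalgebra ℂ (Matrix ι ι ℂ))
    (ES ET ER : Matrix ι ι ℂ →ₗ[ℂ] Matrix ι ι ℂ)
    (hES : IsCondExp S ES) (hET : IsCondExp T ET) (hER : IsCondExp (S ⊓ T) ER)
    (hineq : ∀ ρ : Matrix ι ι ℂ, IsDensity ρ →
      0 ≤ vnEntropy (ES ρ) + vnEntropy (ET ρ) - vnEntropy ρ - vnEntropy (ER ρ)) :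
    ES.comp ET = ER ∧ ET.comp ES = ER := by
  rcases Nat.eq_zero_or_pos (Fintype.card ι) with hc | hcard
  · haveI : IsEmpty ι := Fintype.card_eq_zero_iff.mp hc
    constructor <;> (apply LinearMap.ext; intro a; ext i j; exact (IsEmpty.false i).elim)
  set N : ℝ := (Fintype.card ι : ℝ) with hNdef
  have hN0 : 0 < N := by rw [hNdef]; exact_mod_cast hcard
  -- the quadratic inequality
  have hquad : ∀ x : Matrix ι ι ℂ, x.IsHermitian → Matrix.trace x = 0 →
      (Matrix.trace (ES x * ES x)).re + (Matrix.trace (ET x * ET x)).re ≤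
      (Matrix.trace (x * x)).re + (Matrix.trace (ER x * ER x)).re := by
    intro x hx htx
    have hSx : (ES x).IsHermitian := condExp_isHermitian hES hx
    have hTx : (ET x).IsHermitian := condExp_isHermitian hET hx
    have hRx : (ER x).IsHermitian := condExp_isHermitian hER hx
    have htS : Matrix.trace (ES x) = 0 := by rw [condExp_trace hES, htx]
    have htT : Matrix.trace (ET x) = 0 := by rw [condExp_trace hET, htx]
    have htR : Matrix.trace (ER x) = 0 := by rw [condExp_trace hER, htx]
    set τ1 : ℝ := (Matrix.trace (x * x)).re with hτ1
    set τ2 : ℝ := (Matrix.trace (ES x * ES x)).re with hτ2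
    set τ3 : ℝ := (Matrix.trace (ET x * ET x)).re with hτ3
    set τ4 : ℝ := (Matrix.trace (ER x * ER x)).re with hτ4
    set C : ℝ := Real.sqrt τ1 + Real.sqrt τ2 + Real.sqrt τ3 + Real.sqrt τ4 + 1 with hC
    have hC0 : 0 < C := by
      have := Real.sqrt_nonneg τ1; have := Real.sqrt_nonneg τ2
      have := Real.sqrt_nonneg τ3; have := Real.sqrt_nonneg τ4
      rw [hC]; linarith
    have hsC : ∀ τ : ℝ, τ = τ1 ∨ τ = τ2 ∨ τ = τ3 ∨ τ = τ4 → Real.sqrt τ ≤ C := by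
      intro τ hτ
      have h1 := Real.sqrt_nonneg τ1; have h2 := Real.sqrt_nonneg τ2
      have h3 := Real.sqrt_nonneg τ3; have h4 := Real.sqrt_nonneg τ4
      rcases hτ with h|h|h|h <;> rw [h, hC] <;> linarith
    have hcube : ∀ τ : ℝ, 0 ≤ τ → Real.sqrt τ ≤ C → τ * Real.sqrt τ ≤ C^3 := by
      intro τ h0 hle
      have : τ * Real.sqrt τ = (Real.sqrt τ)^3 := by
        nth_rewrite 1 [← Real.sq_sqrt h0]; ring
      rw [this]
      exact pow_le_pow_left₀ (Real.sqrt_nonneg τ) hle 3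
    have hεbound : ∀ ε : ℝ, 0 < ε → ε ≤ 1/(2*C) →
        τ2 + τ3 - τ1 - τ4 ≤ 32 * C^3 * ε := by
      intro ε hε hεle
      have hsmall : ∀ τ : ℝ, Real.sqrt τ ≤ C → ε * Real.sqrt τ ≤ 1/2 := by
        intro τ hle
        calc ε * Real.sqrt τ ≤ (1/(2*C)) * C := by
              apply mul_le_mul hεle hle (Real.sqrt_nonneg τ) (by positivity)
          _ = 1/2 := by field_simp
      obtain ⟨hd1, hb1⟩ := entropy_expansion x hx htx hcard ε hε
        (hsmall _ (hsC τ1 (Or.inl rfl)))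
      obtain ⟨hd2, hb2⟩ := entropy_expansion (ES x) hSx htS hcard ε hε
        (hsmall _ (hsC τ2 (Or.inr (Or.inl rfl))))
      obtain ⟨hd3, hb3⟩ := entropy_expansion (ET x) hTx htT hcard ε hε
        (hsmall _ (hsC τ3 (Or.inr (Or.inr (Or.inl rfl)))))
      obtain ⟨hd4, hb4⟩ := entropy_expansion (ER x) hRx htR hcard ε hε
        (hsmall _ (hsC τ4 (Or.inr (Or.inr (Or.inr rfl)))))
      have hESρ : ES ((((N:ℝ):ℂ))⁻¹ • (1 + (ε:ℂ) • x))
          = (((N:ℝ):ℂ))⁻¹ • (1 + (ε:ℂ) • ES x) := by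
        rw [LinearMap.map_smul, LinearMap.map_add, LinearMap.map_smul, condExp_one hES]
      have hETρ : ET ((((N:ℝ):ℂ))⁻¹ • (1 + (ε:ℂ) • x))
          = (((N:ℝ):ℂ))⁻¹ • (1 + (ε:ℂ) • ET x) := by
        rw [LinearMap.map_smul, LinearMap.map_add, LinearMap.map_smul, condExp_one hET]
      have hERρ : ER ((((N:ℝ):ℂ))⁻¹ • (1 + (ε:ℂ) • x))
          = (((N:ℝ):ℂ))⁻¹ • (1 + (ε:ℂ) • ER x) := by
        rw [LinearMap.map_smul, LinearMap.map_add, LinearMap.map_smul, condExp_one hER]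
      have hmain := hineq _ hd1
      rw [hESρ, hETρ, hERρ] at hmain
      rw [show (((Fintype.card ι : ℝ)) : ℂ) = ((N:ℝ):ℂ) by rw [hNdef]] at hmain
      simp only [← hNdef, ← hτ1, ← hτ2, ← hτ3, ← hτ4] at hb1 hb2 hb3 hb4
      have e1 := abs_le.mp hb1
      have e2 := abs_le.mp hb2
      have e3 := abs_le.mp hb3
      have e4 := abs_le.mp hb4
      have c1 : τ1 * Real.sqrt τ1 ≤ C^3 :=
        hcube τ1 (q_nonneg hx) (hsC τ1 (Or.inl rfl))
      have c2 : τ2 * Real.sqrt τ2 ≤ C^3 :=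
        hcube τ2 (q_nonneg hSx) (hsC τ2 (Or.inr (Or.inl rfl)))
      have c3 : τ3 * Real.sqrt τ3 ≤ C^3 :=
        hcube τ3 (q_nonneg hTx) (hsC τ3 (Or.inr (Or.inr (Or.inl rfl))))
      have c4 : τ4 * Real.sqrt τ4 ≤ C^3 :=
        hcube τ4 (q_nonneg hRx) (hsC τ4 (Or.inr (Or.inr (Or.inr rfl))))
      have hb : ∀ z : ℝ, z ≤ C^3 → 4*ε^3*z/N ≤ 4*ε^3*C^3/N := by
        intro z hz
        gcongr
      have d1 := hb _ c1
      have d2 := hb _ c2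
      have d3 := hb _ c3
      have d4 := hb _ c4
      have key : 0 ≤ ε^2*(τ1 + τ4 - τ2 - τ3)/(2*N) + 16*ε^3*C^3/N := by
        have g1 := e1.1; have g2 := e2.2; have g3 := e3.2; have g4 := e4.1
        ring_nf at g1 g2 g3 g4 d1 d2 d3 d4 hmain ⊢
        linarith [g1, g2, g3, g4, d1, d2, d3, d4, hmain]
      have key' : 0 ≤ ε^2*(τ1 + τ4 - τ2 - τ3) + 32*ε^3*C^3 := by
        have h2N : (0:ℝ) < 2*N := by linarith
        have := mul_le_mul_of_nonneg_left key (le_of_lt h2N)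
        rw [mul_zero] at this
        calc (0:ℝ) ≤ 2*N*(ε^2*(τ1 + τ4 - τ2 - τ3)/(2*N) + 16*ε^3*C^3/N) := this
          _ = ε^2*(τ1 + τ4 - τ2 - τ3) + 32*ε^3*C^3 := by field_simp; ring
      have key2 : ε^2*(τ2 + τ3 - τ1 - τ4) ≤ ε^2*(32*C^3*ε) := by nlinarith [key']
      exact le_of_mul_le_mul_left key2 (pow_pos hε 2)
    -- take ε → 0
    by_contra hcon
    push_neg at hcon
    set A : ℝ := τ2 + τ3 - τ1 - τ4 with hA
    have hA0 : 0 < A := by rw [hA]; linarith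
    have hK : (0:ℝ) < 32*C^3 := by positivity
    set ε : ℝ := min (1/(2*C)) (A/(2*(32*C^3))) with hε
    have hε0 : 0 < ε := lt_min (by positivity) (by positivity)
    have h := hεbound ε hε0 (min_le_left _ _)
    have h2 : 32*C^3*ε ≤ A/2 := by
      calc 32*C^3*ε ≤ 32*C^3*(A/(2*(32*C^3))) :=
            mul_le_mul_of_nonneg_left (min_le_right _ _) hK.le
        _ = A/2 := by field_simp
    clear_value ε A C τ1 τ2 τ3 τ4
    linarith only [h, h2, hA0]
  -- algebraic consequences
  have hERfix : ∀ a, ER (ER a) = ER a := fun a => hER.2.1 _ (hER.1 a)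
  have hESfixR : ∀ a, ES (ER a) = ER a := fun a =>
    hES.2.1 _ ((StarSubalgebra.mem_inf.mp (hER.1 a)).1)
  have hETfixR : ∀ a, ET (ER a) = ER a := fun a =>
    hET.2.1 _ ((StarSubalgebra.mem_inf.mp (hER.1 a)).2)
  have hERET : ∀ a, ER (ET a) = ER a := by
    intro a
    apply condExp_unique (hER.1 _) (hER.1 a)
    intro b hb
    rw [← hER.2.2 (ET a) b hb, ← hET.2.2 a b (StarSubalgebra.mem_inf.mp hb).2,
      hER.2.2 a b hb]
  have hERES : ∀ a, ER (ES a) = ER a := by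
    intro a
    apply condExp_unique (hER.1 _) (hER.1 a)
    intro b hb
    rw [← hER.2.2 (ES a) b hb, ← hES.2.2 a b (StarSubalgebra.mem_inf.mp hb).1,
      hER.2.2 a b hb]
  -- key step for Hermitian traceless elements
  have key1S : ∀ a : Matrix ι ι ℂ, a.IsHermitian → Matrix.trace a = 0 →
      ES (ET a) = ER a := by
    intro a ha hta
    set v : Matrix ι ι ℂ := ET a - ER a with hv
    have hvH : v.IsHermitian :=
      (condExp_isHermitian hET ha).sub (condExp_isHermitian hER ha)
    have hvt : Matrix.trace v = 0 := by
      rw [hv, Matrix.trace_sub, condExp_trace hET, condExp_trace hER, sub_self]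
    have hETv : ET v = v := by
      rw [hv, map_sub, hET.2.1 _ (hET.1 a), hETfixR a]
    have hERv : ER v = 0 := by
      rw [hv, map_sub, hERET a, hERfix a, sub_self]
    have h := hquad v hvH hvt
    rw [hETv, hERv] at h
    have h0 : (Matrix.trace ((0:Matrix ι ι ℂ) * 0)).re = 0 := by simp
    rw [h0] at h
    have hq0 : (Matrix.trace (ES v * ES v)).re = 0 :=
      le_antisymm (by linarith) (q_nonneg (condExp_isHermitian hES hvH))
    have hv0 : ES v = 0 := q_eq_zero (condExp_isHermitian hES hvH) hq0
    rw [hv, map_sub, hESfixR a, sub_eq_zero] at hv0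
    rw [hv0]
  have key1T : ∀ a : Matrix ι ι ℂ, a.IsHermitian → Matrix.trace a = 0 →
      ET (ES a) = ER a := by
    intro a ha hta
    set v : Matrix ι ι ℂ := ES a - ER a with hv
    have hvH : v.IsHermitian :=
      (condExp_isHermitian hES ha).sub (condExp_isHermitian hER ha)
    have hvt : Matrix.trace v = 0 := by
      rw [hv, Matrix.trace_sub, condExp_trace hES, condExp_trace hER, sub_self]
    have hESv : ES v = v := by
      rw [hv, map_sub, hES.2.1 _ (hES.1 a), hESfixR a]
    have hERv : ER v = 0 := by
      rw [hv, map_sub, hERES a, hERfix a, sub_self]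
    have h := hquad v hvH hvt
    rw [hESv, hERv] at h
    have h0 : (Matrix.trace ((0:Matrix ι ι ℂ) * 0)).re = 0 := by simp
    rw [h0] at h
    have hq0 : (Matrix.trace (ET v * ET v)).re = 0 :=
      le_antisymm (by linarith) (q_nonneg (condExp_isHermitian hET hvH))
    have hv0 : ET v = 0 := q_eq_zero (condExp_isHermitian hET hvH) hq0
    rw [hv, map_sub, hETfixR a, sub_eq_zero] at hv0
    rw [hv0]
  -- extension from Hermitian traceless to everything
  have ext_step : ∀ (F : Matrix ι ι ℂ →ₗ[ℂ] Matrix ι ι ℂ), F 1 = 1 →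
      (∀ a, F (star a) = star (F a)) →
      (∀ a : Matrix ι ι ℂ, a.IsHermitian → Matrix.trace a = 0 → F a = ER a) →
      ∀ a, F a = ER a := by
    intro F hF1 hFstar hF
    have hcast : ((Fintype.card ι : ℕ) : ℂ) ≠ 0 := by
      exact_mod_cast Nat.pos_iff_ne_zero.mp hcard
    have hherm : ∀ a : Matrix ι ι ℂ, a.IsHermitian → F a = ER a := by
      intro a ha
      set c : ℂ := Matrix.trace a / (Fintype.card ι : ℂ) with hc
      have htr1 : Matrix.trace (1 : Matrix ι ι ℂ) = (Fintype.card ι : ℂ) :=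
        Matrix.trace_one
      have hcstar : star c = c := by
        rw [hc]
        have : star (Matrix.trace a) = Matrix.trace a := by
          rw [← Matrix.trace_conjTranspose, ha.eq]
        rw [star_div₀, this]
        congr 1
        simp
      have ha0H : (a - c • 1).IsHermitian := by
        show (a - c • 1)ᴴ = a - c • 1
        rw [Matrix.conjTranspose_sub, ha.eq, Matrix.conjTranspose_smul,
          Matrix.conjTranspose_one, hcstar]
      have ha0t : Matrix.trace (a - c • 1) = 0 := by
        rw [Matrix.trace_sub, Matrix.trace_smul, htr1, hc, smul_eq_mul,
          div_mul_cancel₀ _ hcast, sub_self]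
      have h0 := hF _ ha0H ha0t
      have hER1 : ER 1 = 1 := condExp_one hER
      calc F a = F (a - c • 1) + c • F 1 := by
            rw [map_sub, LinearMap.map_smul]; abel
        _ = ER (a - c • 1) + c • ER 1 := by rw [h0, hF1, hER1]
        _ = ER a := by rw [← LinearMap.map_smul, ← map_add]; congr 1; abel
    intro a
    have hhH : ((1/2 : ℂ) • (a + star a)).IsHermitian := by
      show ((1/2 : ℂ) • (a + star a))ᴴ = (1/2 : ℂ) • (a + star a)
      rw [Matrix.conjTranspose_smul, Matrix.conjTranspose_add]
      rw [← Matrix.star_eq_conjTranspose, ← Matrix.star_eq_conjTranspose, star_star]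
      rw [show star (1/2 : ℂ) = (1/2 : ℂ) by simp]
      rw [add_comm]
    have hkH : ((-Complex.I/2 : ℂ) • (a - star a)).IsHermitian := by
      show ((-Complex.I/2 : ℂ) • (a - star a))ᴴ = (-Complex.I/2 : ℂ) • (a - star a)
      rw [Matrix.conjTranspose_smul, Matrix.conjTranspose_sub]
      rw [← Matrix.star_eq_conjTranspose, ← Matrix.star_eq_conjTranspose, star_star]
      rw [show star (-Complex.I/2 : ℂ) = (Complex.I/2 : ℂ) by simp]
      module
    have hdecomp : a = (1/2 : ℂ) • (a + star a) +
        Complex.I • ((-Complex.I/2 : ℂ) • (a - star a)) := by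
      rw [smul_smul]
      rw [show Complex.I * (-Complex.I/2) = (1/2 : ℂ) by
        norm_num [Complex.ext_iff]]
      module
    calc F a = F ((1/2 : ℂ) • (a + star a)) +
          Complex.I • F ((-Complex.I/2 : ℂ) • (a - star a)) := by
          rw [← LinearMap.map_smul, ← map_add, ← hdecomp]
      _ = ER ((1/2 : ℂ) • (a + star a)) +
          Complex.I • ER ((-Complex.I/2 : ℂ) • (a - star a)) := by
          rw [hherm _ hhH, hherm _ hkH]
      _ = ER a := by rw [← LinearMap.map_smul, ← map_add, ← hdecomp]
  constructor
  · apply LinearMap.ext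
    intro a
    have hF1 : (ES.comp ET) 1 = 1 := by
      simp [LinearMap.comp_apply, condExp_one hET, condExp_one hES]
    have hFs : ∀ a, (ES.comp ET) (star a) = star ((ES.comp ET) a) := by
      intro a
      simp [LinearMap.comp_apply, condExp_star hET, condExp_star hES]
    exact ext_step (ES.comp ET) hF1 hFs (fun a ha hta => key1S a ha hta) a
  · apply LinearMap.ext
    intro a
    have hF1 : (ET.comp ES) 1 = 1 := by
      simp [LinearMap.comp_apply, condExp_one hES, condExp_one hET]
    have hFs : ∀ a, (ET.comp ES) (star a) = star ((ET.comp ES) a) := by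
      intro a
      simp [LinearMap.comp_apply, condExp_star hES, condExp_star hET]
    exact ext_step (ET.comp ES) hF1 hFs (fun a ha hta => key1T a ha hta) a
end

section
/- Let S, T ⊆ M be subalgebras forming a commuting square and let σ be a density with E_T(σ) = σ. Then for every density ρ, −D(E_S(ρ)‖E_S(σ)) − D(E_T(ρ)‖E_T(σ)) + D(ρ‖σ) + D(E_{S∩T}(ρ)‖E_{S∩T}(σ)) = H(S)_ρ + H(T)_ρ − H(M)_ρ − H(S∩T)_ρ. -/
open Matrix
open scoped ComplexOrder

variable {ι : Type*} [Fintype ι] [DecidableEq ι]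

open Polynomial in
lemma aeval_eq_conj_diagonal (ρ : Matrix ι ι ℂ) (h : ρ.IsHermitian) (p : ℂ[X]) :
    aeval ρ p = (h.eigenvectorUnitary : Matrix ι ι ℂ) *
      Matrix.diagonal (fun i => p.eval ((h.eigenvalues i : ℂ))) *
      star (h.eigenvectorUnitary : Matrix ι ι ℂ) := by
  set U : Matrix ι ι ℂ := (h.eigenvectorUnitary : Matrix ι ι ℂ) with hUdef
  have hU1 : U * star U = 1 :=
    (Matrix.mem_unitaryGroup_iff).mp h.eigenvectorUnitary.2
  have hU2 : star U * U = 1 :=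
    (Matrix.mem_unitaryGroup_iff').mp h.eigenvectorUnitary.2
  induction p using Polynomial.induction_on with
  | C a =>
      have hd : Matrix.diagonal (fun _ : ι => a) = a • (1 : Matrix ι ι ℂ) :=
        (Matrix.smul_one_eq_diagonal a).symm
      simp only [aeval_C, eval_C, hd]
      rw [Matrix.mul_smul, Matrix.smul_mul, mul_one, hU1, Algebra.algebraMap_eq_smul_one]
  | add p q hp hq =>
      rw [map_add, hp, hq, ← Matrix.add_mul, ← Matrix.mul_add]
      have hD : (Matrix.diagonal fun i => p.eval ((h.eigenvalues i : ℂ)))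
            + (Matrix.diagonal fun i => q.eval ((h.eigenvalues i : ℂ)))
          = Matrix.diagonal fun i => (p + q).eval ((h.eigenvalues i : ℂ)) :=
        (Matrix.diagonal_add _ _).trans (congrArg _ (funext fun i => by simp))
      rw [hD]
  | monomial n a hp =>
      have hspec : ρ = U * Matrix.diagonal (fun i => ((h.eigenvalues i : ℂ))) * star U := by
        have := h.spectral_theorem
        exact this
      have hconj : ∀ A B : Matrix ι ι ℂ,
          (U * A * star U) * (U * B * star U) = U * (A * B) * star U := by
        intro A B
        calc (U * A * star U) * (U * B * star U)
            = U * A * (star U * U) * B * star U := by noncomm_ring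
          _ = U * (A * B) * star U := by rw [hU2]; noncomm_ring
      have hstep : aeval ρ (C a * X ^ (n + 1)) = aeval ρ (C a * X ^ n) * ρ := by
        rw [pow_succ, ← mul_assoc, _root_.map_mul, aeval_X]
      have hρeq : (U * (Matrix.diagonal fun i => (C a * X ^ n).eval ((h.eigenvalues i : ℂ)))
            * star U) * ρ
          = (U * (Matrix.diagonal fun i => (C a * X ^ n).eval ((h.eigenvalues i : ℂ))) * star U)
            * (U * (Matrix.diagonal fun i => ((h.eigenvalues i : ℂ))) * star U) := by
        rw [← hspec]
      rw [hstep, hp, hρeq, hconj, Matrix.diagonal_mul_diagonal]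
      have : (fun i => (C a * X ^ n).eval ((h.eigenvalues i : ℂ)) * ((h.eigenvalues i : ℂ)))
          = fun i => (C a * X ^ (n + 1)).eval ((h.eigenvalues i : ℂ)) := by
        funext i; simp [pow_succ]; ring
      rw [this]

open Polynomial in
lemma matFun_mem (N : StarSubalgebra ℂ (Matrix ι ι ℂ)) (f : ℝ → ℝ)
    (ρ : Matrix ι ι ℂ) (hρ : ρ ∈ N) : matFun f ρ ∈ N := by
  unfold matFun
  split_ifs with h
  · set s : Finset ℂ := Finset.image (fun i => ((h.eigenvalues i : ℂ))) Finset.univ with hs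
    set p : ℂ[X] := Lagrange.interpolate s id (fun z => ((f z.re : ℂ))) with hp
    have hval : ∀ i : ι, p.eval ((h.eigenvalues i : ℂ)) = (f (h.eigenvalues i) : ℂ) := by
      intro i
      have hmem : ((h.eigenvalues i : ℂ)) ∈ s := by
        simp [hs]
      have := Lagrange.eval_interpolate_at_node (v := id) (s := s)
        (r := fun z => ((f z.re : ℂ))) (Set.injOn_id _) hmem
      simpa [hp] using this
    have heq : (h.eigenvectorUnitary : Matrix ι ι ℂ) *
        Matrix.diagonal (fun i => (f (h.eigenvalues i) : ℂ)) *
        star (h.eigenvectorUnitary : Matrix ι ι ℂ) = aeval ρ p := by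
      rw [aeval_eq_conj_diagonal ρ h p]
      have : (fun i => (f (h.eigenvalues i) : ℂ)) = fun i => p.eval ((h.eigenvalues i : ℂ)) :=
        funext fun i => (hval i).symm
      rw [this]
    rw [heq]
    have hle : Algebra.adjoin ℂ {ρ} ≤ N.toSubalgebra :=
      Algebra.adjoin_le (by simpa using hρ)
    exact hle (aeval_mem_adjoin_singleton ℂ ρ)
  · exact zero_mem N

/-- For a commuting square `S, T ⊆ M` and an `E_T`-invariant
density `σ`, the relative-entropy combination collapses to the entropy
expression:
`−D(E_S ρ‖E_S σ) − D(E_T ρ‖E_T σ) + D(ρ‖σ) + D(E_{S∩T} ρ‖E_{S∩T} σ)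
  = H(S)_ρ + H(T)_ρ − H(M)_ρ − H(S∩T)_ρ`. -/

theorem relEntropy_combination_eq_entropy_expression
    (S T : StarSubalgebra ℂ (Matrix ι ι ℂ))
    (ES ET ER : Matrix ι ι ℂ →ₗ[ℂ] Matrix ι ι ℂ)
    (hES : IsCondExp S ES) (hET : IsCondExp T ET) (hER : IsCondExp (S ⊓ T) ER)
    (hsq1 : ES.comp ET = ER) (hsq2 : ET.comp ES = ER)
    (σ : Matrix ι ι ℂ) (hσ : IsDensity σ) (hσT : ET σ = σ)
    (ρ : Matrix ι ι ℂ) (hρ : IsDensity ρ) :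
    - relEntropy (ES ρ) (ES σ) - relEntropy (ET ρ) (ET σ)
        + relEntropy ρ σ + relEntropy (ER ρ) (ER σ)
      = vnEntropy (ES ρ) + vnEntropy (ET ρ) - vnEntropy ρ - vnEntropy (ER ρ) := by
  have hERσ : ER σ = ES σ := by
    rw [← hsq1]; simp [LinearMap.comp_apply, hσT]
  have hESσ_ST : ES σ ∈ S ⊓ T := by
    rw [← hERσ]; exact hER.1 σ
  have hL_ST : matLog (ES σ) ∈ S ⊓ T := matFun_mem _ _ _ hESσ_ST
  have hL_S : matLog (ES σ) ∈ S := by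
    have := hL_ST; rw [StarSubalgebra.mem_inf] at this; exact this.1
  have hσT_mem : σ ∈ T := by rw [← hσT]; exact hET.1 σ
  have hlogσ_T : matLog σ ∈ T := matFun_mem _ _ _ hσT_mem
  have e1 : (Matrix.trace (ES ρ * matLog (ES σ))).re
      = (Matrix.trace (ρ * matLog (ES σ))).re := by
    rw [← hES.2.2 ρ _ hL_S]
  have e2 : (Matrix.trace (ER ρ * matLog (ER σ))).re
      = (Matrix.trace (ρ * matLog (ES σ))).re := by
    rw [hERσ, ← hER.2.2 ρ _ hL_ST]
  have e3 : (Matrix.trace (ET ρ * matLog (ET σ))).re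
      = (Matrix.trace (ρ * matLog σ)).re := by
    rw [hσT, ← hET.2.2 ρ _ hlogσ_T]
  simp only [relEntropy, vnEntropy, Matrix.trace_sub, Complex.sub_re, e1, e2, e3]
  ring
end
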